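/- Let G be a finite simple graph with no isolated vertices and n vertices. Then R(G) = n/2 − (1/2)·Σ_{uv∈E(G)} (√(d_u) − √(d_v))²/(d_u d_v). -/

import Mathlib

open Finset

variable {V : Type*}

/-- Randić index: `Σ_{uv∈E} (d_u d_v)^{-1/2}`, written as half a double sum over vertices. -/
noncomputable def randicIndex [Fintype V] (G : SimpleGraph V) [DecidableRel G.Adj] : ℝ :=
  (1 / 2) * ∑ u, ∑ v ∈ G.neighborFinset u,
    1 / Real.sqrt ((G.degree u : ℝ) * (G.degree v : ℝ))

lemma randic_key (a b : ℝ) (ha : 0 < a) (hb : 0 < b) :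
    (Real.sqrt a - Real.sqrt b)^2 / (a*b)
      = 1/a + 1/b - 2*(1/Real.sqrt (a*b)) := by
  have hab : 0 < a * b := mul_pos ha hb
  have hprod : Real.sqrt (a*b) ^ 2 = a*b := Real.sq_sqrt hab.le
  have hs : Real.sqrt (a*b) = Real.sqrt a * Real.sqrt b := Real.sqrt_mul ha.le b
  have e : (Real.sqrt a - Real.sqrt b)^2 = a + b - 2 * Real.sqrt (a*b) := by
    rw [hs]
    linear_combination Real.sq_sqrt ha.le + Real.sq_sqrt hb.le
  have hs0 : Real.sqrt (a*b) ≠ 0 := (Real.sqrt_pos.mpr hab).ne'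
  rw [e]
  field_simp
  linear_combination (-2) * hprod

theorem randic_diff_identity [Fintype V] (G : SimpleGraph V) [DecidableRel G.Adj]
    (hiso : ∀ v : V, 0 < G.degree v) :
    randicIndex G = (Fintype.card V : ℝ) / 2 -
      (1 / 2) * ((1 / 2) * ∑ u, ∑ v ∈ G.neighborFinset u,
        (Real.sqrt (G.degree u) - Real.sqrt (G.degree v))^2 /
          ((G.degree u : ℝ) * (G.degree v : ℝ))) := by
  have hdeg : ∀ u : V, (0:ℝ) < (G.degree u : ℝ) := fun u => by exact_mod_cast hiso u
  have hsplit : ∀ u : V, ∑ v ∈ G.neighborFinset u,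
      (Real.sqrt (G.degree u) - Real.sqrt (G.degree v))^2 /
        ((G.degree u : ℝ) * (G.degree v : ℝ))
      = ∑ v ∈ G.neighborFinset u, (1/(G.degree u : ℝ) + 1/(G.degree v : ℝ)
          - 2*(1/Real.sqrt ((G.degree u : ℝ) * (G.degree v : ℝ)))) :=
    fun u => Finset.sum_congr rfl fun v _ => randic_key _ _ (hdeg u) (hdeg v)
  have h1 : ∑ u : V, ∑ v ∈ G.neighborFinset u, (1/(G.degree u : ℝ))
      = (Fintype.card V : ℝ) := by
    rw [← Finset.card_univ, Finset.card_eq_sum_ones, Nat.cast_sum]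
    refine Finset.sum_congr rfl fun u _ => ?_
    rw [Finset.sum_const, G.card_neighborFinset_eq_degree, nsmul_eq_mul,
      mul_one_div, div_self (hdeg u).ne']
    norm_num
  have hswap : ∑ u : V, ∑ v ∈ G.neighborFinset u, (1/(G.degree v : ℝ))
      = ∑ v : V, ∑ u ∈ G.neighborFinset v, (1/(G.degree v : ℝ)) := by
    apply Finset.sum_comm'
    intro x y
    simp [SimpleGraph.mem_neighborFinset, G.adj_comm]
  have h2 : ∑ u : V, ∑ v ∈ G.neighborFinset u, (1/(G.degree v : ℝ))
      = (Fintype.card V : ℝ) := by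
    rw [hswap, ← Finset.card_univ, Finset.card_eq_sum_ones, Nat.cast_sum]
    refine Finset.sum_congr rfl fun v _ => ?_
    rw [Finset.sum_const, G.card_neighborFinset_eq_degree, nsmul_eq_mul,
      mul_one_div, div_self (hdeg v).ne']
    norm_num
  have hT : ∑ u : V, ∑ v ∈ G.neighborFinset u,
      (Real.sqrt (G.degree u) - Real.sqrt (G.degree v))^2 /
        ((G.degree u : ℝ) * (G.degree v : ℝ))
      = 2 * (Fintype.card V : ℝ)
        - 2 * ∑ u : V, ∑ v ∈ G.neighborFinset u,
            1 / Real.sqrt ((G.degree u : ℝ) * (G.degree v : ℝ)) := by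
    rw [Finset.sum_congr rfl fun u _ => hsplit u]
    have hexp : ∑ u : V, ∑ v ∈ G.neighborFinset u, (1/(G.degree u : ℝ) + 1/(G.degree v : ℝ)
          - 2*(1/Real.sqrt ((G.degree u : ℝ) * (G.degree v : ℝ))))
        = (∑ u : V, ∑ v ∈ G.neighborFinset u, (1/(G.degree u : ℝ)))
          + (∑ u : V, ∑ v ∈ G.neighborFinset u, (1/(G.degree v : ℝ)))
          - 2 * ∑ u : V, ∑ v ∈ G.neighborFinset u,
              1 / Real.sqrt ((G.degree u : ℝ) * (G.degree v : ℝ)) := by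
      simp only [Finset.sum_sub_distrib, Finset.sum_add_distrib, ← Finset.mul_sum]
    rw [hexp, h1, h2]
    ring
  rw [randicIndex, hT]
  ring
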